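/- arXiv:2309.16642 — 2 statements merged into one kernel-verified Lean document; each statement's English description precedes it below -/
import Mathlib

section
/- Let φ : [0,∞) → [0,1] be a C² solution of −φ'' = f(φ) with φ(0) = 0, φ' > 0, φ(+∞) = 1, where f is C¹ with f(1) = 0 and f'(1) < 0. Suppose ψ ∈ H¹(0,∞) is positive on (0,∞), ψ(0) = 0, and solves −ψ'' − f'(φ)ψ = λψ with both ψ and φ' decaying exponentially at infinity. Then λ ∫₀^∞ ψ φ' = ψ'(0) φ'(0) > 0, and hence λ > 0. -/
open MeasureTheory Set Filter Real

/-- Let `φ : [0,∞) → [0,1]` be a `C²` solution of `−φ'' = f(φ)` with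
`φ(0) = 0`, `φ' > 0`, `φ(+∞) = 1`, where `f` is `C¹` with `f(1) = 0`, `f'(1) < 0`.
Suppose `ψ ∈ H¹(0,∞)` is positive on `(0,∞)`, `ψ(0) = 0`, solves `−ψ'' − f'(φ)ψ = λψ`,
and both `ψ` and `φ'` decay exponentially at infinity.  Then
`λ ∫₀^∞ ψ φ' = ψ'(0) φ'(0) > 0`, hence `λ > 0`. -/
theorem stmt_4 (f φ ψ : ℝ → ℝ) (lam : ℝ)
    (hfC1 : ContDiff ℝ 1 f) (hf1 : f 1 = 0) (hf1' : deriv f 1 < 0)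
    (hφC2 : ContDiff ℝ 2 φ) (hφ0 : φ 0 = 0)
    (hφrange : ∀ x, 0 ≤ x → φ x ∈ Set.Icc (0 : ℝ) 1)
    (hφeq : ∀ x, 0 ≤ x → -(deriv (deriv φ) x) = f (φ x))
    (hφ' : ∀ x, 0 ≤ x → 0 < deriv φ x)
    (hφlim : Filter.Tendsto φ Filter.atTop (nhds 1))
    (hψC2 : ContDiff ℝ 2 ψ) (hψ0 : ψ 0 = 0)
    (hψpos : ∀ x, 0 < x → 0 < ψ x)
    (hψeq : ∀ x, 0 ≤ x → -(deriv (deriv ψ) x) - deriv f (φ x) * ψ x = lam * ψ x)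
    (hψH1 : MemLp ψ 2 (volume.restrict (Set.Ioi (0 : ℝ))) ∧
      MemLp (deriv ψ) 2 (volume.restrict (Set.Ioi (0 : ℝ))))
    (hdecay : ∃ C μ : ℝ, 0 < C ∧ 0 < μ ∧ ∀ x, 0 ≤ x →
      |ψ x| ≤ C * Real.exp (-μ * x) ∧ |deriv φ x| ≤ C * Real.exp (-μ * x)) :
    lam * ∫ x in Set.Ioi (0 : ℝ), ψ x * deriv φ x = deriv ψ 0 * deriv φ 0 ∧
    0 < deriv ψ 0 * deriv φ 0 ∧ 0 < lam := by
  obtain ⟨C, μ, hC, hμ, hdec⟩ := hdecay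
  -- basic regularity
  have hψ1 : ContDiff ℝ 1 (deriv ψ) :=
    ((contDiff_succ_iff_deriv (n := 1)).mp (by exact_mod_cast hψC2)).2.2
  have hφ1 : ContDiff ℝ 1 (deriv φ) :=
    ((contDiff_succ_iff_deriv (n := 1)).mp (by exact_mod_cast hφC2)).2.2
  have hdψ : Differentiable ℝ ψ := hψC2.differentiable (by norm_num)
  have hdφ : Differentiable ℝ φ := hφC2.differentiable (by norm_num)
  have hdψ' : Differentiable ℝ (deriv ψ) := hψ1.differentiable one_ne_zero
  have hdφ' : Differentiable ℝ (deriv φ) := hφ1.differentiable one_ne_zero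
  have hcψ'' : Continuous (deriv (deriv ψ)) := (contDiff_one_iff_deriv.mp hψ1).2
  have hcφ'' : Continuous (deriv (deriv φ)) := (contDiff_one_iff_deriv.mp hφ1).2
  have hdf : Differentiable ℝ f := hfC1.differentiable one_ne_zero
  have hcf' : Continuous (deriv f) := (contDiff_one_iff_deriv.mp hfC1).2
  -- bound on f' on [0,1]
  obtain ⟨M0, hM0⟩ := (isCompact_Icc (a := (0:ℝ)) (b := 1)).exists_bound_of_continuousOn
    (hcf'.continuousOn)
  set M : ℝ := max M0 0 with hM
  have hMnn : 0 ≤ M := le_max_right _ _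
  have hMb : ∀ x, 0 ≤ x → |deriv f (φ x)| ≤ M := fun x hx =>
    le_trans (hM0 _ (hφrange x hx)) (le_max_left _ _)
  -- second derivative of ψ
  have hψ'' : ∀ x, 0 ≤ x → deriv (deriv ψ) x = -(deriv f (φ x) * ψ x) - lam * ψ x := by
    intro x hx; have := hψeq x hx; linarith
  set K : ℝ := M + |lam| with hK
  have hψ''bd : ∀ x, 0 ≤ x → |deriv (deriv ψ) x| ≤ K * (C * Real.exp (-μ * x)) := by
    intro x hx
    rw [hψ'' x hx]
    have h1 : |(-(deriv f (φ x) * ψ x) - lam * ψ x)| ≤ (|deriv f (φ x)| + |lam|) * |ψ x| := by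
      have h := abs_sub (-(deriv f (φ x) * ψ x)) (lam * ψ x)
      rw [abs_neg, abs_mul, abs_mul] at h
      exact h.trans (le_of_eq (by ring))
    have h2 : |deriv f (φ x)| + |lam| ≤ K := by
      have := hMb x hx; simp only [hK]; linarith
    have h3 : |ψ x| ≤ C * Real.exp (-μ * x) := (hdec x hx).1
    exact h1.trans (mul_le_mul h2 h3 (abs_nonneg _) (by positivity))
  -- the Wronskian
  set W : ℝ → ℝ := fun x => deriv ψ x * deriv φ x - ψ x * deriv (deriv φ) x with hWdef
  have hWcont : Continuous W := by
    exact ((hdψ'.continuous.mul hdφ'.continuous).sub (hdψ.continuous.mul hcφ''))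
  have hWderiv : ∀ x, 0 < x → HasDerivAt W (-(lam * (ψ x * deriv φ x))) x := by
    intro x hx
    have hev : deriv (deriv φ) =ᶠ[nhds x] (fun y => -f (φ y)) := by
      filter_upwards [Ioi_mem_nhds hx] with y hy
      have := hφeq y (le_of_lt hy); linarith
    have hcomp : HasDerivAt (fun y => -f (φ y)) (-(deriv f (φ x) * deriv φ x)) x :=
      (((hdf (φ x)).hasDerivAt.comp x (hdφ x).hasDerivAt)).neg
    have hw' : HasDerivAt (deriv (deriv φ)) (-(deriv f (φ x) * deriv φ x)) x :=
      hcomp.congr_of_eventuallyEq hev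
    have h1 : HasDerivAt (fun y => deriv ψ y * deriv φ y)
        (deriv (deriv ψ) x * deriv φ x + deriv ψ x * deriv (deriv φ) x) x :=
      ((hdψ' x).hasDerivAt).mul ((hdφ' x).hasDerivAt)
    have h2 : HasDerivAt (fun y => ψ y * deriv (deriv φ) y)
        (deriv ψ x * deriv (deriv φ) x + ψ x * (-(deriv f (φ x) * deriv φ x))) x :=
      ((hdψ x).hasDerivAt).mul hw'
    have h3 := h1.sub h2
    have heq : deriv (deriv ψ) x * deriv φ x + deriv ψ x * deriv (deriv φ) x -
        (deriv ψ x * deriv (deriv φ) x + ψ x * (-(deriv f (φ x) * deriv φ x)))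
        = -(lam * (ψ x * deriv φ x)) := by
      rw [hψ'' x hx.le]; ring
    rw [heq] at h3
    exact h3
  -- FTC on [0, R]
  have hFTC : ∀ R, 0 ≤ R → W R = W 0 - lam * ∫ x in (0:ℝ)..R, ψ x * deriv φ x := by
    intro R hR
    have hint : IntervalIntegrable (fun x => -(lam * (ψ x * deriv φ x))) volume 0 R :=
      ((continuous_const.mul (hdψ.continuous.mul hdφ'.continuous)).neg).intervalIntegrable 0 R
    have := intervalIntegral.integral_eq_sub_of_hasDeriv_right_of_le hR
      (hWcont.continuousOn)
      (fun x hx => (hWderiv x hx.1).hasDerivWithinAt) hint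
    have hmul : (∫ x in (0:ℝ)..R, -(lam * (ψ x * deriv φ x)))
        = -(lam * ∫ x in (0:ℝ)..R, ψ x * deriv φ x) := by
      rw [intervalIntegral.integral_neg, intervalIntegral.integral_const_mul]
    rw [hmul] at this
    linarith
  -- integrability of ψ * φ' on (0,∞)
  have hexp2 : IntegrableOn (fun x => C * C * Real.exp (-(2*μ) * x)) (Ioi (0:ℝ)) :=
    (exp_neg_integrableOn_Ioi 0 (by positivity)).const_mul (C*C)
  have hintI : IntegrableOn (fun x => ψ x * deriv φ x) (Ioi (0:ℝ)) := by
    apply Integrable.mono' hexp2 ((hdψ.continuous.mul hdφ'.continuous).aestronglyMeasurable)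
    rw [ae_restrict_iff' measurableSet_Ioi]
    filter_upwards with x hx
    have h1 := (hdec x (le_of_lt hx)).1
    have h2 := (hdec x (le_of_lt hx)).2
    have hee : Real.exp (-μ*x) * Real.exp (-μ*x) = Real.exp (-(2*μ)*x) := by
      rw [← Real.exp_add]; congr 1; ring
    calc ‖ψ x * deriv φ x‖ = |ψ x| * |deriv φ x| := by rw [Real.norm_eq_abs, abs_mul]
      _ ≤ (C * Real.exp (-μ * x)) * (C * Real.exp (-μ * x)) :=
          mul_le_mul h1 h2 (abs_nonneg _) (by positivity)
      _ = C * C * Real.exp (-(2*μ) * x) := by rw [← hee]; ring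
  set I : ℝ := ∫ x in Ioi (0:ℝ), ψ x * deriv φ x with hIdef
  have htendI : Tendsto (fun R => ∫ x in (0:ℝ)..R, ψ x * deriv φ x) atTop (nhds I) :=
    intervalIntegral_tendsto_integral_Ioi 0 hintI tendsto_id
  have hWlim1 : Tendsto W atTop (nhds (W 0 - lam * I)) := by
    have h1 := (htendI.const_mul lam).const_sub (W 0)
    apply h1.congr'
    filter_upwards [eventually_ge_atTop (0:ℝ)] with R hR
    exact (hFTC R hR).symm
  -- ψ' is bounded
  set B0 : ℝ := ∫ t in Ioi (0:ℝ), K * (C * Real.exp (-μ * t)) with hB0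
  have hgint : IntegrableOn (fun t => K * (C * Real.exp (-μ * t))) (Ioi (0:ℝ)) :=
    ((exp_neg_integrableOn_Ioi 0 hμ).const_mul C).const_mul K
  have hgcont : Continuous fun t : ℝ => K * (C * Real.exp (-μ * t)) := by fun_prop
  have hψ'bd : ∀ x, 0 ≤ x → |deriv ψ x| ≤ |deriv ψ 0| + B0 := by
    intro x hx
    have hFTC2 : ∫ t in (0:ℝ)..x, deriv (deriv ψ) t = deriv ψ x - deriv ψ 0 :=
      intervalIntegral.integral_deriv_eq_sub (fun t _ => hdψ' t)
        (hcψ''.intervalIntegrable 0 x)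
    have habs : |∫ t in (0:ℝ)..x, deriv (deriv ψ) t|
        ≤ ∫ t in (0:ℝ)..x, |deriv (deriv ψ) t| := by
      simpa [Real.norm_eq_abs] using
        intervalIntegral.norm_integral_le_integral_norm
          (f := fun t => deriv (deriv ψ) t) (μ := volume) (a := 0) (b := x) hx
    have hmono : ∫ t in (0:ℝ)..x, |deriv (deriv ψ) t|
        ≤ ∫ t in (0:ℝ)..x, K * (C * Real.exp (-μ * t)) :=
      intervalIntegral.integral_mono_on hx (hcψ''.abs.intervalIntegrable 0 x)
        (hgcont.intervalIntegrable 0 x) (fun t ht => hψ''bd t ht.1)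
    have hmono2 : ∫ t in (0:ℝ)..x, K * (C * Real.exp (-μ * t)) ≤ B0 := by
      rw [intervalIntegral.integral_of_le hx]
      apply setIntegral_mono_set hgint
      · filter_upwards with t
        positivity
      · exact (Ioc_subset_Ioi_self).eventuallyLE
    calc |deriv ψ x| = |deriv ψ 0 + (deriv ψ x - deriv ψ 0)| := by ring_nf
      _ ≤ |deriv ψ 0| + |deriv ψ x - deriv ψ 0| := abs_add_le _ _
      _ ≤ |deriv ψ 0| + B0 := by rw [← hFTC2]; linarith
  -- decay limits
  have hexpT : Tendsto (fun x : ℝ => C * Real.exp (-μ * x)) atTop (nhds 0) := by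
    have h1 : Tendsto (fun x : ℝ => -μ * x) atTop atBot :=
      (tendsto_const_mul_atBot_of_neg (by linarith)).mpr tendsto_id
    have h2 := Real.tendsto_exp_atBot.comp h1
    simpa using h2.const_mul C
  have hterm1 : Tendsto (fun R => deriv ψ R * deriv φ R) atTop (nhds 0) := by
    apply squeeze_zero_norm'
      (a := fun R => (|deriv ψ 0| + B0) * (C * Real.exp (-μ * R)))
    · filter_upwards [eventually_ge_atTop (0:ℝ)] with R hR
      calc ‖deriv ψ R * deriv φ R‖ = |deriv ψ R| * |deriv φ R| := by
            rw [Real.norm_eq_abs, abs_mul]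
        _ ≤ (|deriv ψ 0| + B0) * (C * Real.exp (-μ * R)) :=
            mul_le_mul (hψ'bd R hR) (hdec R hR).2 (abs_nonneg _)
              (by positivity)
    · simpa using hexpT.const_mul (|deriv ψ 0| + B0)
  have hψT : Tendsto ψ atTop (nhds 0) := by
    apply squeeze_zero_norm' (a := fun x => C * Real.exp (-μ * x))
    · filter_upwards [eventually_ge_atTop (0:ℝ)] with x hx
      simpa [Real.norm_eq_abs] using (hdec x hx).1
    · exact hexpT
  have hw'T : Tendsto (fun R => deriv (deriv φ) R) atTop (nhds 0) := by
    have h1 : Tendsto (fun R => -f (φ R)) atTop (nhds (-f 1)) :=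
      ((hfC1.continuous.tendsto 1).comp hφlim).neg
    rw [hf1, neg_zero] at h1
    apply h1.congr'
    filter_upwards [eventually_ge_atTop (0:ℝ)] with R hR
    have := hφeq R hR; linarith
  have hterm2 : Tendsto (fun R => ψ R * deriv (deriv φ) R) atTop (nhds 0) := by
    simpa using hψT.mul hw'T
  have hWlim0 : Tendsto W atTop (nhds 0) := by
    simpa using hterm1.sub hterm2
  have hW0 : W 0 = deriv ψ 0 * deriv φ 0 := by simp [hWdef, hψ0]
  have hkey : lam * I = deriv ψ 0 * deriv φ 0 := by
    have := tendsto_nhds_unique hWlim1 hWlim0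
    linarith
  -- positivity of I
  have hIpos : 0 < I := by
    have h1 : 0 < ∫ x in (0:ℝ)..1, ψ x * deriv φ x :=
      intervalIntegral.intervalIntegral_pos_of_pos_on
        ((hdψ.continuous.mul hdφ'.continuous).intervalIntegrable 0 1)
        (fun x hx => mul_pos (hψpos x hx.1) (hφ' x hx.1.le)) one_pos
    have h2 : ∫ x in (0:ℝ)..1, ψ x * deriv φ x ≤ I := by
      rw [intervalIntegral.integral_of_le zero_le_one]
      apply setIntegral_mono_set hintI ?_ (Ioc_subset_Ioi_self).eventuallyLE
      filter_upwards [ae_restrict_mem measurableSet_Ioi] with x hx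
      exact (mul_pos (hψpos x hx) (hφ' x hx.le)).le
    linarith
  -- ψ'(0) ≥ 0
  have hψ'0nonneg : 0 ≤ deriv ψ 0 := by
    have hd : HasDerivAt ψ (deriv ψ 0) 0 := (hdψ 0).hasDerivAt
    have hslope := hasDerivAt_iff_tendsto_slope.mp hd
    have hmono : nhdsWithin (0:ℝ) (Ioi 0) ≤ nhdsWithin (0:ℝ) {(0:ℝ)}ᶜ :=
      nhdsWithin_mono _ (fun x hx => ne_of_gt hx)
    refine ge_of_tendsto (hslope.mono_left hmono) ?_
    filter_upwards [self_mem_nhdsWithin] with x hx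
    have hx' : (0:ℝ) < x := hx
    have hs : slope ψ 0 x = ψ x / x := by
      rw [slope_def_field]; rw [hψ0]; ring_nf
    rw [hs]
    exact div_nonneg (hψpos x hx').le hx'.le
  -- ψ'(0) > 0 via Gronwall
  have hψ'0pos : 0 < deriv ψ 0 := by
    rcases hψ'0nonneg.lt_or_eq with h | h
    · exact h
    exfalso
    have hlam0 : lam = 0 := by
      have hz : lam * I = 0 := by rw [hkey, ← h]; ring
      rcases mul_eq_zero.mp hz with h' | h'
      · exact h'
      · exact absurd h' (ne_of_gt hIpos)
    set v : ℝ → ℝ × ℝ := fun t => (ψ t, deriv ψ t) with hv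
    have hvd : ∀ t, HasDerivAt v (deriv ψ t, deriv (deriv ψ) t) t := fun t =>
      ((hdψ t).hasDerivAt.prodMk ((hdψ' t).hasDerivAt))
    have hnv : ∀ t, ‖v t‖ = max |ψ t| |deriv ψ t| := by
      intro t
      rw [Prod.norm_def, Real.norm_eq_abs, Real.norm_eq_abs]
    have hbound : ∀ t ∈ Set.Ico (0:ℝ) 2,
        ‖(deriv ψ t, deriv (deriv ψ) t)‖ ≤ (M+1) * ‖v t‖ + 0 := by
      intro t ht
      rw [add_zero]
      have h2 : |deriv (deriv ψ) t| ≤ M * |ψ t| := by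
        rw [hψ'' t ht.1, hlam0]
        have : |(-(deriv f (φ t) * ψ t) - 0 * ψ t)| = |deriv f (φ t)| * |ψ t| := by
          rw [zero_mul, sub_zero, abs_neg, abs_mul]
        rw [this]
        exact mul_le_mul_of_nonneg_right (hMb t ht.1) (abs_nonneg _)
      rw [Prod.norm_def, Real.norm_eq_abs, Real.norm_eq_abs, hnv]
      apply max_le
      · calc |deriv ψ t| ≤ max |ψ t| |deriv ψ t| := le_max_right _ _
          _ ≤ (M+1) * max |ψ t| |deriv ψ t| := by nlinarith [le_max_left |ψ t| |deriv ψ t|, abs_nonneg (ψ t), le_max_right |ψ t| |deriv ψ t|, abs_nonneg (deriv ψ t)]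
      · calc |deriv (deriv ψ) t| ≤ M * |ψ t| := h2
          _ ≤ (M+1) * max |ψ t| |deriv ψ t| := by nlinarith [le_max_left |ψ t| |deriv ψ t|, abs_nonneg (ψ t), le_max_right |ψ t| |deriv ψ t|, abs_nonneg (deriv ψ t)]
    have hva : ‖v 0‖ ≤ 0 := by
      rw [hnv, hψ0, ← h]
      simp
    have hgron := norm_le_gronwallBound_of_norm_deriv_right_le
      (f := v) (f' := fun t => (deriv ψ t, deriv (deriv ψ) t))
      (δ := 0) (K := M+1) (ε := 0) (a := 0) (b := 2)
      ((hdψ.continuous.prodMk hdψ'.continuous).continuousOn)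
      (fun x _ => (hvd x).hasDerivWithinAt) hva hbound
    have h1 := hgron 1 (by norm_num)
    rw [gronwallBound_ε0_δ0] at h1
    have hz : ψ 1 = 0 := by
      have hv0 : ‖v 1‖ ≤ 0 := h1
      rw [hnv 1] at hv0
      have h1' : |ψ 1| ≤ 0 := le_trans (le_max_left _ _) hv0
      exact abs_eq_zero.mp (le_antisymm h1' (abs_nonneg _))
    exact absurd hz (ne_of_gt (hψpos 1 one_pos))
  have hpos : 0 < deriv ψ 0 * deriv φ 0 := mul_pos hψ'0pos (hφ' 0 le_rfl)
  have hlampos : 0 < lam := by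
    by_contra hle
    push_neg at hle
    nlinarith [hkey, hIpos, hpos]
  exact ⟨hkey, hpos, hlampos⟩
end

section
/- Let φ solve −φ'' = f(φ) on [0,∞) with φ(0) = 0, φ strictly increasing, φ(+∞) = 1, where f is C¹ with f(1) = 0 and f'(1) < 0. Then 1 − φ(x) decays exponentially as x → ∞: there exist C, μ > 0 with 1 − φ(x) ≤ C e^{−μx}. -/
open Set Filter Real


/-- Let `φ` solve `−φ'' = f(φ)` on `[0,∞)` with `φ(0) = 0`, `φ` strictly
increasing, `φ(+∞) = 1`, where `f` is `C¹` with `f(1) = 0` and `f'(1) < 0`.  Then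
`1 − φ(x)` decays exponentially: there exist `C, μ > 0` with `1 − φ(x) ≤ C e^{−μx}`. -/
theorem stmt_5 (f φ : ℝ → ℝ)
    (hfC1 : ContDiff ℝ 1 f) (hf1 : f 1 = 0) (hf1' : deriv f 1 < 0)
    (hφC2 : ContDiff ℝ 2 φ) (hφ0 : φ 0 = 0)
    (hφrange : ∀ x, 0 ≤ x → φ x ∈ Set.Ico (0 : ℝ) 1)
    (hφmono : StrictMonoOn φ (Set.Ici (0 : ℝ)))
    (hφeq : ∀ x, 0 ≤ x → -(deriv (deriv φ) x) = f (φ x))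
    (hφlim : Filter.Tendsto φ Filter.atTop (nhds 1)) :
    ∃ C μ : ℝ, 0 < C ∧ 0 < μ ∧ ∀ x, 0 ≤ x → 1 - φ x ≤ C * Real.exp (-μ * x) := by
  -- derivative facts
  have h2 : ContDiff ℝ ((1 : WithTop ℕ∞) + 1) φ := by norm_num; exact hφC2
  have h1 : ContDiff ℝ 1 (deriv φ) := (contDiff_succ_iff_deriv.1 h2).2.2
  have hdφ : ∀ x, HasDerivAt φ (deriv φ x) x :=
    fun x => (hφC2.differentiable (by norm_num)).differentiableAt.hasDerivAt
  have hdφ2 : ∀ x, HasDerivAt (deriv φ) (deriv (deriv φ) x) x :=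
    fun x => (h1.differentiable one_ne_zero).differentiableAt.hasDerivAt
  have hfd : Differentiable ℝ f := hfC1.differentiable one_ne_zero
  -- the constant a
  obtain ⟨a, ha_def⟩ : ∃ a : ℝ, a = -deriv f 1 / 2 := ⟨_, rfl⟩
  have ha : 0 < a := by rw [ha_def]; linarith
  obtain ⟨μ, hμ_def⟩ : ∃ μ : ℝ, μ = Real.sqrt a := ⟨_, rfl⟩
  have hμ : 0 < μ := hμ_def ▸ Real.sqrt_pos.2 ha
  have hμ2 : μ * μ = a := hμ_def ▸ Real.mul_self_sqrt ha.le
  -- continuity of f' near 1 : ∃ δ > 0, ∀ s, |s-1| < δ → deriv f s < -a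
  have hcd : ContinuousAt (deriv f) 1 := (hfC1.continuous_deriv le_rfl).continuousAt
  have hev : ∀ᶠ s in nhds (1:ℝ), deriv f s < -a := by
    have : deriv f 1 < -a := by rw [ha_def]; linarith
    exact hcd.eventually_lt continuousAt_const this
  obtain ⟨δ, hδ, hδ'⟩ := Metric.eventually_nhds_iff.1 hev
  -- key : f s ≥ a * (1 - s) for s ∈ (1-δ, 1]
  have hfs : ∀ s : ℝ, 1 - δ < s → s ≤ 1 → a * (1 - s) ≤ f s := by
    intro s hs1 hs2
    rcases eq_or_lt_of_le hs2 with rfl | hs2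
    · simp [hf1]
    obtain ⟨c, hc, hc'⟩ := exists_deriv_eq_slope f hs2
      (hfd.continuous.continuousOn) (hfd.differentiableOn)
    have hcb : deriv f c < -a := by
      apply hδ'
      rw [Real.dist_eq]
      rw [abs_lt]
      constructor <;> [linarith [hc.1]; linarith [hc.2]]
    rw [hf1, eq_div_iff (by linarith : (1:ℝ) - s ≠ 0)] at hc'
    nlinarith [hc', hcb]
  -- choose X
  have hevX : ∀ᶠ x in atTop, 1 - δ < φ x :=
    hφlim.eventually (eventually_gt_nhds (by linarith))
  obtain ⟨X₀, hX₀⟩ := eventually_atTop.1 hevX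
  obtain ⟨X, hX_def⟩ : ∃ X : ℝ, X = max X₀ 1 := ⟨_, rfl⟩
  have hX1 : (1:ℝ) ≤ X := hX_def ▸ le_max_right _ _
  have hX0 : (0:ℝ) ≤ X := by linarith
  have hXφ : ∀ x, X ≤ x → 1 - δ < φ x :=
    fun x hx => hX₀ x (le_trans (le_max_left _ _) (hX_def ▸ hx))
  -- deriv φ nonneg on [0, ∞)
  have hd0 : ∀ x, 0 ≤ x → 0 ≤ deriv φ x := by
    intro x hx
    have hslope := hasDerivAt_iff_tendsto_slope.1 (hdφ x)
    have h2' : Tendsto (slope φ x) (nhdsWithin x (Ioi x)) (nhds (deriv φ x)) :=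
      hslope.mono_left (nhdsWithin_mono x (fun y hy => ne_of_gt hy))
    refine ge_of_tendsto h2' ?_
    filter_upwards [self_mem_nhdsWithin] with y hy
    have hxy : x < y := hy
    have : φ x ≤ φ y := (hφmono hx (le_trans hx hxy.le) hxy).le
    rw [slope_def_field]
    exact div_nonneg (by linarith) (by linarith)
  -- w'' bound on [X,∞)
  have hw2 : ∀ x, X ≤ x → a * (1 - φ x) ≤ -(deriv (deriv φ) x) := by
    intro x hx
    have hx0 : 0 ≤ x := le_trans hX0 hx
    rw [hφeq x hx0]
    exact hfs (φ x) (hXφ x hx) (hφrange x hx0).2.le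
  -- the function v and its derivative
  obtain ⟨v, hv_def⟩ : ∃ v : ℝ → ℝ, v = fun x => -(deriv φ x) + μ * (1 - φ x) := ⟨_, rfl⟩
  have hdv : ∀ x, HasDerivAt v (-(deriv (deriv φ) x) + μ * (-(deriv φ x))) x := by
    intro x
    rw [hv_def]
    exact ((hdφ2 x).neg).add (((hdφ x).const_sub 1).const_mul μ)
  -- v is bounded above by μ on [0,∞)
  have hvb : ∀ x, 0 ≤ x → v x ≤ μ := by
    intro x hx
    have h1 := hd0 x hx
    have h2 := (hφrange x hx).1
    have : μ * (1 - φ x) ≤ μ * 1 := by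
      apply mul_le_mul_of_nonneg_left (by linarith) hμ.le
    simp only [hv_def]
    linarith
  -- v ≤ 0 on [X,∞)
  have hvneg : ∀ x, X ≤ x → v x ≤ 0 := by
    intro x₀ hx₀
    by_contra hpos
    push_neg at hpos
    -- g = v * exp(-μ x) is monotone on [x₀, ∞)
    obtain ⟨g, hg_def⟩ : ∃ g : ℝ → ℝ, g = fun x => v x * Real.exp (-μ * x) := ⟨_, rfl⟩
    have hdg : ∀ x, HasDerivAt g
        ((-(deriv (deriv φ) x) + μ * (-(deriv φ x))) * Real.exp (-μ * x)
          + v x * (Real.exp (-μ * x) * (-μ))) x := by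
      intro x
      have he : HasDerivAt (fun x => Real.exp (-μ * x)) (Real.exp (-μ * x) * (-μ)) x := by
        simpa using ((hasDerivAt_id x).const_mul (-μ)).exp
      rw [hg_def]
      exact (hdv x).mul he
    have hmono : MonotoneOn g (Set.Ici x₀) := by
      apply monotoneOn_of_deriv_nonneg (convex_Ici x₀)
      · have hcv : Continuous v := by
          rw [hv_def]
          exact (h1.continuous.neg).add
            (continuous_const.mul (continuous_const.sub hφC2.continuous))
        have hce : Continuous (fun x => Real.exp (-μ * x)) :=
          Real.continuous_exp.comp (continuous_const.mul continuous_id)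
        rw [hg_def]
        exact (hcv.mul hce).continuousOn
      · intro x _
        exact ((hdg x).differentiableAt).differentiableWithinAt
      · intro x hx
        rw [interior_Ici] at hx
        rw [(hdg x).deriv]
        have hxX : X ≤ x := le_trans hx₀ (le_of_lt hx)
        have hk := hw2 x hxX
        have hepos : 0 < Real.exp (-μ * x) := Real.exp_pos _
        have hsimp : (-(deriv (deriv φ) x) + μ * (-(deriv φ x))) * Real.exp (-μ * x)
            + v x * (Real.exp (-μ * x) * (-μ))
            = ((-(deriv (deriv φ) x)) - a * (1 - φ x)) * Real.exp (-μ * x) := by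
          simp only [hv_def]
          rw [← hμ2]
          ring
        rw [hsimp]
        exact mul_nonneg (by linarith) hepos.le
    -- evaluate at x₁ = x₀ + 1/(v x₀)
    have hw0 : v x₀ ≠ 0 := ne_of_gt hpos
    have hvpos : 0 < 1 / v x₀ := by positivity
    have hx₁ : x₀ ≤ x₀ + 1 / v x₀ := by linarith
    have hgle := hmono Set.self_mem_Ici (by exact hx₁ : x₀ + 1 / v x₀ ∈ Set.Ici x₀) hx₁
    simp only [hg_def] at hgle
    have hexp : μ / v x₀ + 1 ≤ Real.exp (μ / v x₀) := Real.add_one_le_exp _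
    have h2 : Real.exp (-μ * x₀) = Real.exp (-μ * (x₀ + 1 / v x₀)) * Real.exp (μ / v x₀) := by
      rw [← Real.exp_add]
      congr 1
      field_simp
      ring
    rw [h2] at hgle
    have hepos : 0 < Real.exp (-μ * (x₀ + 1 / v x₀)) := Real.exp_pos _
    have h3 : v x₀ * Real.exp (μ / v x₀) ≤ v (x₀ + 1 / v x₀) :=
      le_of_mul_le_mul_right (by nlinarith [hgle]) hepos
    have h4 : v x₀ * (μ / v x₀ + 1) ≤ v x₀ * Real.exp (μ / v x₀) :=
      mul_le_mul_of_nonneg_left hexp hpos.le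
    have h5 : v x₀ * (μ / v x₀ + 1) = μ + v x₀ := by
      field_simp
    have h6 := hvb (x₀ + 1 / v x₀) (le_trans (le_trans hX0 hx₀) hx₁)
    linarith
  -- h = (1-φ) e^{μ x} is antitone on [X, ∞)
  obtain ⟨h, hh_def⟩ : ∃ h : ℝ → ℝ, h = fun x => (1 - φ x) * Real.exp (μ * x) := ⟨_, rfl⟩
  have hdh : ∀ x, HasDerivAt h (v x * Real.exp (μ * x)) x := by
    intro x
    have he : HasDerivAt (fun x => Real.exp (μ * x)) (Real.exp (μ * x) * μ) x := by
      simpa using ((hasDerivAt_id x).const_mul μ).exp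
    have : HasDerivAt (fun x => (1 - φ x) * Real.exp (μ * x))
        (-deriv φ x * Real.exp (μ * x) + (1 - φ x) * (Real.exp (μ * x) * μ)) x :=
      ((hdφ x).const_sub 1).mul he
    rw [hh_def]
    convert this using 1
    simp only [hv_def]
    ring
  have hanti : AntitoneOn h (Set.Ici X) := by
    apply antitoneOn_of_deriv_nonpos (convex_Ici X)
    · have hce : Continuous (fun x => Real.exp (μ * x)) :=
        Real.continuous_exp.comp (continuous_const.mul continuous_id)
      rw [hh_def]
      exact ((continuous_const.sub hφC2.continuous).mul hce).continuousOn
    · intro x _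
      exact ((hdh x).differentiableAt).differentiableWithinAt
    · intro x hx
      rw [interior_Ici] at hx
      rw [(hdh x).deriv]
      have := hvneg x (le_of_lt hx)
      have hepos : 0 < Real.exp (μ * x) := Real.exp_pos _
      exact mul_nonpos_of_nonpos_of_nonneg this hepos.le
  -- conclude
  refine ⟨Real.exp (μ * X), μ, Real.exp_pos _, hμ, ?_⟩
  intro x hx
  rcases le_or_gt X x with hXx | hXx
  · have h1 : h x ≤ h X := hanti (Set.self_mem_Ici) hXx hXx
    simp only [hh_def] at h1
    have h2 : (1 - φ X) * Real.exp (μ * X) ≤ Real.exp (μ * X) := by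
      have := (hφrange X hX0).1
      have hepos : 0 < Real.exp (μ * X) := Real.exp_pos _
      nlinarith
    have hepos : 0 < Real.exp (μ * x) := Real.exp_pos _
    have h3 : (1 - φ x) * Real.exp (μ * x) ≤ Real.exp (μ * X) := le_trans h1 h2
    have h4 : Real.exp (μ * X) * Real.exp (-μ * x) * Real.exp (μ * x) = Real.exp (μ * X) := by
      rw [mul_assoc, ← Real.exp_add]
      simp
    refine le_of_mul_le_mul_right ?_ hepos
    calc (1 - φ x) * Real.exp (μ * x) ≤ Real.exp (μ * X) := h3
      _ = Real.exp (μ * X) * Real.exp (-μ * x) * Real.exp (μ * x) := h4.symm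
  · have h1 : 1 - φ x ≤ 1 := by linarith [(hφrange x hx).1]
    have h2 : (1:ℝ) ≤ Real.exp (μ * X) * Real.exp (-μ * x) := by
      rw [← Real.exp_add]
      have : 0 ≤ μ * X + -μ * x := by nlinarith
      calc (1:ℝ) = Real.exp 0 := by simp
        _ ≤ Real.exp (μ * X + -μ * x) := Real.exp_le_exp.2 this
    linarith
end
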